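/- Let φ ∈ G₂^dec and 1 ≤ q ≤ p < ∞ with r^{−n/p} ≲ φ(r) for all r>0. Suppose a diffeomorphism ψ:ℝⁿ→ℝⁿ induces a bounded composition operator C_ψ on the generalized Morrey space M_q^φ(ℝⁿ). Then there exists C>0, independent of x₀ and f, such that ‖f(Dψ(x₀)·)‖_{M_q^φ} ≤ C‖f‖_{M_q^φ} for every x₀ ∈ ℝⁿ and every f ∈ M_q^φ(ℝⁿ). -/

import Mathlib

open MeasureTheory Filter Set
open scoped ENNReal NNReal

noncomputable section

/-- A Young function: convex on `[0,∞)`, vanishing at `0`, nonnegative, tending to `∞`. -/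
def IsYoung (Φ : ℝ → ℝ) : Prop :=
  ConvexOn ℝ (Set.Ici 0) Φ ∧ Φ 0 = 0 ∧ (∀ t, 0 ≤ t → 0 ≤ Φ t) ∧
    Filter.Tendsto Φ Filter.atTop Filter.atTop

/-- Almost decreasing on `(0,∞)`: `g s ≤ C * g r` whenever `0 < r < s`. -/
def AlmostDecreasingOn (g : ℝ → ℝ) : Prop :=
  ∃ C > 0, ∀ r s : ℝ, 0 < r → r < s → g s ≤ C * g r

/-- Almost increasing on `(0,∞)`: `g r ≤ C * g s` whenever `0 < r < s`. -/
def AlmostIncreasingOn (g : ℝ → ℝ) : Prop :=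
  ∃ C > 0, ∀ r s : ℝ, 0 < r → r < s → g r ≤ C * g s

/-- The class `G₁^dec`: positive, almost decreasing and submultiplicative on `(0,∞)`. -/
def G1dec (φ : ℝ → ℝ) : Prop :=
  (∀ r : ℝ, 0 < r → 0 < φ r) ∧ AlmostDecreasingOn φ ∧
    ∃ C > 0, ∀ r s : ℝ, 0 < r → 0 < s → φ (r * s) ≤ C * φ r * φ s

/-- The class `G₂^dec`: `φ ∈ G₀ ∩ G₁^dec` and `φ(1/r) ≤ C/φ(r)`. -/
def G2dec (φ : ℝ → ℝ) : Prop :=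
  G1dec φ ∧ Filter.Tendsto φ (nhdsWithin 0 (Set.Ioi 0)) Filter.atTop ∧
    Filter.Tendsto φ Filter.atTop (nhds 0) ∧
    ∃ C > 0, ∀ r : ℝ, 0 < r → φ r⁻¹ ≤ C / φ r

/-- Generalized inverse of a Young function: `Φ⁻¹(u) = inf {t ≥ 0 : Φ(t) > u}`. -/
def yInv (Φ : ℝ → ℝ) (u : ℝ) : ℝ := sInf {t : ℝ | 0 ≤ t ∧ u < Φ t}

/-- The generalized Morrey norm
`‖f‖_{M_q^φ} = sup_{a, r>0} (1/φ(r)) ((1/|B(a,r)|) ∫_{B(a,r)} |f|^q)^{1/q}`. -/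
def gMorreyNorm {n : ℕ} (q : ℝ) (φ : ℝ → ℝ) (f : EuclideanSpace ℝ (Fin n) → ℝ) : ℝ≥0∞ :=
  ⨆ (a : EuclideanSpace ℝ (Fin n)) (r : ℝ) (_ : 0 < r),
    (ENNReal.ofReal (φ r))⁻¹ *
      ((∫⁻ x in Metric.ball a r, ENNReal.ofReal (|f x| ^ q)) /
          volume (Metric.ball a r)) ^ (1 / q)

end

noncomputable section AuxST10


namespace ST10

open Metric

variable {n : ℕ}

def NN (q : ℝ) (φ : ℝ → ℝ) (g : EuclideanSpace ℝ (Fin n) → ℝ≥0∞) : ℝ≥0∞ :=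
  ⨆ (a : EuclideanSpace ℝ (Fin n)) (r : ℝ) (_ : 0 < r),
    (ENNReal.ofReal (φ r))⁻¹ *
      ((∫⁻ x in Metric.ball a r, g x) / volume (Metric.ball a r)) ^ (1 / q)

lemma gMorrey_eq_NN (q : ℝ) (φ : ℝ → ℝ) (f : EuclideanSpace ℝ (Fin n) → ℝ) :
    gMorreyNorm q φ f = NN q φ (fun x => ENNReal.ofReal (|f x| ^ q)) := rfl

lemma term_le_NN (q : ℝ) (φ : ℝ → ℝ) (g : EuclideanSpace ℝ (Fin n) → ℝ≥0∞)
    (b : EuclideanSpace ℝ (Fin n)) {s : ℝ} (hs : 0 < s) :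
    (ENNReal.ofReal (φ s))⁻¹ *
      ((∫⁻ x in Metric.ball b s, g x) / volume (Metric.ball b s)) ^ (1 / q) ≤ NN q φ g :=
  le_iSup_of_le b (le_iSup_of_le s (le_iSup_of_le hs le_rfl))

lemma inv_le_mul_inv {a b : ℝ≥0∞} (c : ℝ≥0∞) (hb0 : b ≠ 0) (hbt : b ≠ ⊤)
    (ha0 : a ≠ 0) (hat : a ≠ ⊤) (h : b ≤ c * a) : a⁻¹ ≤ c * b⁻¹ := by
  calc a⁻¹ = b * b⁻¹ * a⁻¹ := by rw [ENNReal.mul_inv_cancel hb0 hbt, one_mul]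
    _ ≤ c * a * b⁻¹ * a⁻¹ := by gcongr
    _ = c * b⁻¹ * (a * a⁻¹) := by ring
    _ = c * b⁻¹ := by rw [ENNReal.mul_inv_cancel ha0 hat, mul_one]

lemma ofReal_inv_le_of_le_mul {x y : ℝ} (hx : 0 < x) (h : 1 ≤ y * x) :
    (ENNReal.ofReal x)⁻¹ ≤ ENNReal.ofReal y := by
  rw [← ENNReal.ofReal_inv_of_pos hx]
  apply ENNReal.ofReal_le_ofReal
  rw [inv_eq_one_div, div_le_iff₀ hx]
  linarith

lemma lint_affine (G : EuclideanSpace ℝ (Fin n) → ℝ≥0∞) (c a : EuclideanSpace ℝ (Fin n))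
    {t : ℝ} (ht : 0 < t) (r : ℝ) :
    ∫⁻ x in Metric.ball a r, G (c + t • x) =
      ENNReal.ofReal ((t ^ n)⁻¹) * ∫⁻ y in Metric.ball (c + t • a) (t * r), G y := by
  have hT : MeasurableEmbedding (fun x : EuclideanSpace ℝ (Fin n) => c + t • x) :=
    ((Homeomorph.smulOfNeZero t ht.ne').trans (Homeomorph.addLeft c)).measurableEmbedding
  have hmap : (volume : Measure (EuclideanSpace ℝ (Fin n))).map (fun x => c + t • x)
      = ENNReal.ofReal ((t ^ n)⁻¹) • volume := by
    have h1 : (fun x : EuclideanSpace ℝ (Fin n) => c + t • x) = ((c + ·) ∘ (t • ·)) := rfl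
    rw [h1, ← Measure.map_map (measurable_const_add c) (measurable_const_smul t),
      Measure.map_addHaar_smul volume ht.ne', Measure.map_smul,
      Measure.IsAddLeftInvariant.map_add_left_eq_self c, finrank_euclideanSpace_fin,
      abs_of_pos (by positivity)]
  have hpre : (fun x : EuclideanSpace ℝ (Fin n) => c + t • x) ⁻¹' Metric.ball (c + t • a) (t * r)
      = Metric.ball a r := by
    ext x
    simp only [Set.mem_preimage, Metric.mem_ball, dist_eq_norm]
    rw [show c + t • x - (c + t • a) = t • (x - a) by rw [smul_sub]; abel,
      norm_smul, Real.norm_eq_abs, abs_of_pos ht]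
    exact mul_lt_mul_iff_right₀ ht
  calc ∫⁻ x in Metric.ball a r, G (c + t • x)
      = ∫⁻ y, G y ∂((volume.restrict (Metric.ball a r)).map (fun x => c + t • x)) :=
        (hT.lintegral_map G).symm
    _ = ∫⁻ y, G y ∂(((volume : Measure (EuclideanSpace ℝ (Fin n))).map (fun x => c + t • x)).restrict
          (Metric.ball (c + t • a) (t * r))) := by
        rw [Measure.restrict_map hT.measurable measurableSet_ball, hpre]
    _ = ENNReal.ofReal ((t ^ n)⁻¹) * ∫⁻ y in Metric.ball (c + t • a) (t * r), G y := by
        rw [hmap, Measure.restrict_smul, lintegral_smul_measure, smul_eq_mul]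

lemma mean_affine (G : EuclideanSpace ℝ (Fin n) → ℝ≥0∞) (c a : EuclideanSpace ℝ (Fin n))
    {t : ℝ} (ht : 0 < t) (r : ℝ) :
    (∫⁻ x in Metric.ball a r, G (c + t • x)) / volume (Metric.ball a r)
      = (∫⁻ y in Metric.ball (c + t • a) (t * r), G y) / volume (Metric.ball (c + t • a) (t * r)) := by
  have hvol : volume (Metric.ball a r)
      = ENNReal.ofReal ((t ^ n)⁻¹) * volume (Metric.ball (c + t • a) (t * r)) := by
    simpa [setLIntegral_one] using lint_affine (n := n) (fun _ => (1 : ℝ≥0∞)) c a ht r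
  rw [lint_affine G c a ht r, hvol,
    ENNReal.mul_div_mul_left _ _ (by positivity) ENNReal.ofReal_ne_top]

lemma vol_ball_eq (b : EuclideanSpace ℝ (Fin n)) {s : ℝ} (hs : 0 < s) :
    volume (Metric.ball b s)
      = ENNReal.ofReal (s ^ n) * volume (Metric.ball (0 : EuclideanSpace ℝ (Fin n)) 1) := by
  have h := lint_affine (n := n) (fun _ => (1 : ℝ≥0∞)) b 0 hs 1
  simp only [setLIntegral_one, smul_zero, add_zero, mul_one] at h
  rw [h, ← mul_assoc, ← ENNReal.ofReal_mul (by positivity),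
    mul_inv_cancel₀ (by positivity), ENNReal.ofReal_one, one_mul]

lemma invert_bound {q : ℝ} (hq : 0 < q) {c V I Z : ℝ≥0∞} (hc0 : c ≠ 0) (hct : c ≠ ⊤)
    (hV0 : V ≠ 0) (hVt : V ≠ ⊤) (H : c⁻¹ * ((I / V) ^ (1 / q)) ≤ Z) : I ≤ V * (c * Z) ^ q := by
  have h1 : (I / V) ^ (1 / q) ≤ c * Z := by
    calc (I / V) ^ (1 / q) = c * (c⁻¹ * (I / V) ^ (1 / q)) := by
          rw [← mul_assoc, ENNReal.mul_inv_cancel hc0 hct, one_mul]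
      _ ≤ c * Z := by gcongr
  have h2 : I / V ≤ (c * Z) ^ q := by
    have h3 := ENNReal.rpow_le_rpow h1 hq.le
    rwa [← ENNReal.rpow_mul, one_div, inv_mul_cancel₀ hq.ne', ENNReal.rpow_one] at h3
  rw [mul_comm]
  exact (ENNReal.div_le_iff_le_mul (Or.inl hV0) (Or.inl hVt)).1 h2

lemma invert_bound' {q : ℝ} (hq : 0 < q) {c V I Z : ℝ≥0∞} (hc0 : c ≠ 0) (hct : c ≠ ⊤)
    (hV0 : V ≠ 0) (hVt : V ≠ ⊤) (H : I ≤ V * (c * Z) ^ q) : c⁻¹ * ((I / V) ^ (1 / q)) ≤ Z := by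
  have h2 : I / V ≤ (c * Z) ^ q := by
    rw [mul_comm] at H
    exact (ENNReal.div_le_iff_le_mul (Or.inl hV0) (Or.inl hVt)).2 H
  have h1 : (I / V) ^ (1 / q) ≤ c * Z := by
    have h3 := ENNReal.rpow_le_rpow h2 (by positivity : (0:ℝ) ≤ 1 / q)
    rwa [← ENNReal.rpow_mul, mul_one_div, div_self hq.ne', ENNReal.rpow_one] at h3
  calc c⁻¹ * (I / V) ^ (1 / q) ≤ c⁻¹ * (c * Z) := by gcongr
    _ = Z := by rw [← mul_assoc, ENNReal.inv_mul_cancel hc0 hct, one_mul]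

lemma star_lsc (φ : ℝ → ℝ) (q : ℝ) (hq : 1 ≤ q)
    (hpos : ∀ r : ℝ, 0 < r → 0 < φ r)
    {Cs : ℝ} (hCs : 0 < Cs)
    (hsub : ∀ r s : ℝ, 0 < r → 0 < s → φ (r * s) ≤ Cs * φ r * φ s)
    {C4 : ℝ} (hC4 : 0 < C4) (h4 : ∀ r : ℝ, 0 < r → φ r⁻¹ ≤ C4 / φ r)
    {K : ℝ} (hK : 0 < K)
    {ψ : EuclideanSpace ℝ (Fin n) → EuclideanSpace ℝ (Fin n)} (hdiff : Differentiable ℝ ψ)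
    (hb : ∀ f : EuclideanSpace ℝ (Fin n) → ℝ,
      gMorreyNorm q φ (f ∘ ψ) ≤ ENNReal.ofReal K * gMorreyNorm q φ f)
    (x₀ : EuclideanSpace ℝ (Fin n)) (hl : EuclideanSpace ℝ (Fin n) → ℝ≥0∞)
    (h_lsc : LowerSemicontinuous hl) (h_fin : ∀ z, hl z ≠ ⊤)
    (a : EuclideanSpace ℝ (Fin n)) {r : ℝ} (hr : 0 < r) :
    (ENNReal.ofReal (φ r))⁻¹ *
        ((∫⁻ x in Metric.ball a r, hl (fderiv ℝ ψ x₀ x)) / volume (Metric.ball a r)) ^ (1 / q)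
      ≤ ENNReal.ofReal (Cs * (Cs * (K * C4))) * NN q φ hl := by
  have hq0 : (0:ℝ) < q := lt_of_lt_of_le one_pos hq
  have hCCpos : (0:ℝ) < Cs * (Cs * (K * C4)) := by positivity
  -- real representative
  set F : EuclideanSpace ℝ (Fin n) → ℝ := fun z => (hl z).toReal ^ (1 / q) with hF
  have hFh : ∀ z, ENNReal.ofReal (|F z| ^ q) = hl z := by
    intro z
    rw [hF, abs_of_nonneg (Real.rpow_nonneg ENNReal.toReal_nonneg _),
      ← Real.rpow_mul ENNReal.toReal_nonneg, one_div, inv_mul_cancel₀ hq0.ne',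
      Real.rpow_one, ENNReal.ofReal_toReal (h_fin z)]
  -- step 1 : scaled inequality, uniform in t
  have hF1 : ∀ t : ℝ, 0 < t →
      (ENNReal.ofReal (φ r))⁻¹ *
        ((∫⁻ x in Metric.ball a r, hl (t⁻¹ • (ψ (x₀ + t • x) - ψ x₀))) /
          volume (Metric.ball a r)) ^ (1 / q)
        ≤ ENNReal.ofReal (Cs * (Cs * (K * C4))) * NN q φ hl := by
    intro t ht
    have htinv : (0:ℝ) < t⁻¹ := inv_pos.2 ht
    have htr : 0 < t * r := mul_pos ht hr
    set gt : EuclideanSpace ℝ (Fin n) → ℝ := fun y => F (t⁻¹ • (y - ψ x₀)) with hgt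
    -- (a) term of gMorreyNorm (gt ∘ ψ)
    have hterm : (ENNReal.ofReal (φ (t * r)))⁻¹ *
        ((∫⁻ x in Metric.ball a r, hl (t⁻¹ • (ψ (x₀ + t • x) - ψ x₀))) /
          volume (Metric.ball a r)) ^ (1 / q)
        ≤ gMorreyNorm q φ (gt ∘ ψ) := by
      have hmean := mean_affine (n := n) (fun y => ENNReal.ofReal (|gt (ψ y)| ^ q)) x₀ a ht r
      have hrw : (∫⁻ x in Metric.ball a r, hl (t⁻¹ • (ψ (x₀ + t • x) - ψ x₀))) /
            volume (Metric.ball a r)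
          = (∫⁻ y in Metric.ball (x₀ + t • a) (t * r), ENNReal.ofReal (|gt (ψ y)| ^ q)) /
            volume (Metric.ball (x₀ + t • a) (t * r)) := by
        rw [← hmean]
        congr 1
        exact lintegral_congr fun x => (hFh (t⁻¹ • (ψ (x₀ + t • x) - ψ x₀))).symm
      rw [gMorrey_eq_NN, hrw]
      exact term_le_NN q φ _ (x₀ + t • a) htr
    -- (b) dilation bound for gt
    have hgtb : gMorreyNorm q φ gt ≤ ENNReal.ofReal (Cs * φ t⁻¹) * NN q φ hl := by
      rw [gMorrey_eq_NN]
      refine iSup_le fun b => iSup_le fun s => iSup_le fun hs => ?_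
      have hts : 0 < t⁻¹ * s := mul_pos htinv hs
      have hintg : ∀ y, ENNReal.ofReal (|gt y| ^ q) = hl (-(t⁻¹ • ψ x₀) + t⁻¹ • y) := by
        intro y
        rw [hgt]
        simp only
        rw [hFh]
        congr 1
        rw [smul_sub]
        abel
      have hmean := mean_affine (n := n) hl (-(t⁻¹ • ψ x₀)) b htinv s
      have hrw : (∫⁻ y in Metric.ball b s, ENNReal.ofReal (|gt y| ^ q)) /
            volume (Metric.ball b s)
          = (∫⁻ z in Metric.ball (-(t⁻¹ • ψ x₀) + t⁻¹ • b) (t⁻¹ * s), hl z) /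
            volume (Metric.ball (-(t⁻¹ • ψ x₀) + t⁻¹ • b) (t⁻¹ * s)) := by
        rw [← hmean]
        congr 1
        exact lintegral_congr fun y => hintg y
      rw [hrw]
      have hφineq : (ENNReal.ofReal (φ s))⁻¹
          ≤ ENNReal.ofReal (Cs * φ t⁻¹) * (ENNReal.ofReal (φ (t⁻¹ * s)))⁻¹ := by
        apply inv_le_mul_inv
        · exact (ENNReal.ofReal_pos.2 (hpos _ hts)).ne'
        · exact ENNReal.ofReal_ne_top
        · exact (ENNReal.ofReal_pos.2 (hpos _ hs)).ne'
        · exact ENNReal.ofReal_ne_top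
        · rw [← ENNReal.ofReal_mul (mul_nonneg hCs.le (hpos _ htinv).le)]
          apply ENNReal.ofReal_le_ofReal
          exact hsub t⁻¹ s htinv hs
      calc (ENNReal.ofReal (φ s))⁻¹ *
            ((∫⁻ z in Metric.ball (-(t⁻¹ • ψ x₀) + t⁻¹ • b) (t⁻¹ * s), hl z) /
              volume (Metric.ball (-(t⁻¹ • ψ x₀) + t⁻¹ • b) (t⁻¹ * s))) ^ (1 / q)
          ≤ (ENNReal.ofReal (Cs * φ t⁻¹) * (ENNReal.ofReal (φ (t⁻¹ * s)))⁻¹) *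
            ((∫⁻ z in Metric.ball (-(t⁻¹ • ψ x₀) + t⁻¹ • b) (t⁻¹ * s), hl z) /
              volume (Metric.ball (-(t⁻¹ • ψ x₀) + t⁻¹ • b) (t⁻¹ * s))) ^ (1 / q) := by gcongr
        _ = ENNReal.ofReal (Cs * φ t⁻¹) * ((ENNReal.ofReal (φ (t⁻¹ * s)))⁻¹ *
            ((∫⁻ z in Metric.ball (-(t⁻¹ • ψ x₀) + t⁻¹ • b) (t⁻¹ * s), hl z) /
              volume (Metric.ball (-(t⁻¹ • ψ x₀) + t⁻¹ • b) (t⁻¹ * s))) ^ (1 / q)) :=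
            mul_assoc _ _ _
        _ ≤ ENNReal.ofReal (Cs * φ t⁻¹) * NN q φ hl := by
            gcongr
            exact term_le_NN q φ hl _ hts
    -- (c) combine
    have hcomb1 : (ENNReal.ofReal (φ r))⁻¹
        ≤ ENNReal.ofReal (Cs * φ t) * (ENNReal.ofReal (φ (t * r)))⁻¹ := by
      apply inv_le_mul_inv
      · exact (ENNReal.ofReal_pos.2 (hpos _ htr)).ne'
      · exact ENNReal.ofReal_ne_top
      · exact (ENNReal.ofReal_pos.2 (hpos _ hr)).ne'
      · exact ENNReal.ofReal_ne_top
      · rw [← ENNReal.ofReal_mul (mul_nonneg hCs.le (hpos _ ht).le)]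
        apply ENNReal.ofReal_le_ofReal
        exact hsub t r ht hr
    have hphi_t : φ t * φ t⁻¹ ≤ C4 := by
      have h4t := h4 t ht
      have hφt := hpos t ht
      calc φ t * φ t⁻¹ ≤ φ t * (C4 / φ t) := by
            exact mul_le_mul_of_nonneg_left h4t hφt.le
        _ = C4 := by field_simp
    calc (ENNReal.ofReal (φ r))⁻¹ *
          ((∫⁻ x in Metric.ball a r, hl (t⁻¹ • (ψ (x₀ + t • x) - ψ x₀))) /
            volume (Metric.ball a r)) ^ (1 / q)
        ≤ (ENNReal.ofReal (Cs * φ t) * (ENNReal.ofReal (φ (t * r)))⁻¹) *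
          ((∫⁻ x in Metric.ball a r, hl (t⁻¹ • (ψ (x₀ + t • x) - ψ x₀))) /
            volume (Metric.ball a r)) ^ (1 / q) := by gcongr
      _ = ENNReal.ofReal (Cs * φ t) * ((ENNReal.ofReal (φ (t * r)))⁻¹ *
          ((∫⁻ x in Metric.ball a r, hl (t⁻¹ • (ψ (x₀ + t • x) - ψ x₀))) /
            volume (Metric.ball a r)) ^ (1 / q)) := mul_assoc _ _ _
      _ ≤ ENNReal.ofReal (Cs * φ t) * gMorreyNorm q φ (gt ∘ ψ) := by gcongr
      _ ≤ ENNReal.ofReal (Cs * φ t) * (ENNReal.ofReal K * gMorreyNorm q φ gt) := by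
          gcongr
          exact hb gt
      _ ≤ ENNReal.ofReal (Cs * φ t) *
            (ENNReal.ofReal K * (ENNReal.ofReal (Cs * φ t⁻¹) * NN q φ hl)) := by gcongr
      _ = (ENNReal.ofReal (Cs * φ t) * ENNReal.ofReal K * ENNReal.ofReal (Cs * φ t⁻¹)) *
            NN q φ hl := by ring
      _ ≤ ENNReal.ofReal (Cs * (Cs * (K * C4))) * NN q φ hl := by
          gcongr
          rw [← ENNReal.ofReal_mul (mul_nonneg hCs.le (hpos _ ht).le),
            ← ENNReal.ofReal_mul (mul_nonneg (mul_nonneg hCs.le (hpos _ ht).le) hK.le)]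
          apply ENNReal.ofReal_le_ofReal
          have hfact : Cs * φ t * K * (Cs * φ t⁻¹) = Cs * Cs * K * (φ t * φ t⁻¹) := by ring
          rw [hfact]
          calc Cs * Cs * K * (φ t * φ t⁻¹) ≤ Cs * Cs * K * C4 := by
                exact mul_le_mul_of_nonneg_left hphi_t (by positivity)
            _ = Cs * (Cs * (K * C4)) := by ring
  -- step 2 : integral-form bound
  set V := volume (Metric.ball a r) with hV
  have hV0 : V ≠ 0 := (measure_ball_pos _ _ hr).ne'
  have hVt : V ≠ ⊤ := measure_ball_lt_top.ne
  have hc0 : (ENNReal.ofReal (φ r)) ≠ 0 := (ENNReal.ofReal_pos.2 (hpos r hr)).ne'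
  have hct : (ENNReal.ofReal (φ r)) ≠ ⊤ := ENNReal.ofReal_ne_top
  have hIb : ∀ k : ℕ, ∫⁻ x in Metric.ball a r,
        hl (((k:ℝ) + 1) • (ψ (x₀ + ((k:ℝ) + 1)⁻¹ • x) - ψ x₀))
      ≤ V * (ENNReal.ofReal (φ r) * (ENNReal.ofReal (Cs * (Cs * (K * C4))) * NN q φ hl)) ^ q := by
    intro k
    have hk : (0:ℝ) < ((k:ℝ) + 1)⁻¹ := by positivity
    have h5 := hF1 (((k:ℝ) + 1)⁻¹) hk
    rw [inv_inv] at h5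
    exact invert_bound hq0 hc0 hct hV0 hVt h5
  -- step 3 : Fatou
  have hmeas_u : ∀ k : ℕ, Measurable fun x : EuclideanSpace ℝ (Fin n) =>
      hl (((k:ℝ) + 1) • (ψ (x₀ + ((k:ℝ) + 1)⁻¹ • x) - ψ x₀)) := by
    intro k
    have hcont : Continuous fun x : EuclideanSpace ℝ (Fin n) =>
        ((k:ℝ) + 1) • (ψ (x₀ + ((k:ℝ) + 1)⁻¹ • x) - ψ x₀) := by
      exact (((hdiff.continuous.comp (continuous_const.add
        (continuous_id.const_smul (((k:ℝ) + 1)⁻¹)))).sub continuous_const).const_smul ((k:ℝ) + 1))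
    exact h_lsc.measurable.comp hcont.measurable
  have hpt : ∀ x, hl (fderiv ℝ ψ x₀ x) ≤ liminf (fun k : ℕ =>
      hl (((k:ℝ) + 1) • (ψ (x₀ + ((k:ℝ) + 1)⁻¹ • x) - ψ x₀))) atTop := by
    intro x
    have hconv : Tendsto (fun k : ℕ => ((k:ℝ) + 1) • (ψ (x₀ + ((k:ℝ) + 1)⁻¹ • x) - ψ x₀))
        atTop (nhds (fderiv ℝ ψ x₀ x)) := by
      refine HasFDerivAt.lim (hdiff x₀).hasFDerivAt x (c := fun k : ℕ => (k:ℝ) + 1) ?_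
      simp only [Real.norm_eq_abs]
      exact tendsto_abs_atTop_atTop.comp
        (tendsto_atTop_add_const_right _ 1 tendsto_natCast_atTop_atTop)
    refine (Filter.le_liminf_iff (by isBoundedDefault) (by isBoundedDefault)).2 ?_
    intro y hy
    exact hconv.eventually (h_lsc _ y hy)
  have hfatou : ∫⁻ x in Metric.ball a r, hl (fderiv ℝ ψ x₀ x)
      ≤ V * (ENNReal.ofReal (φ r) * (ENNReal.ofReal (Cs * (Cs * (K * C4))) * NN q φ hl)) ^ q := by
    calc ∫⁻ x in Metric.ball a r, hl (fderiv ℝ ψ x₀ x)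
        ≤ ∫⁻ x in Metric.ball a r, liminf (fun k : ℕ =>
            hl (((k:ℝ) + 1) • (ψ (x₀ + ((k:ℝ) + 1)⁻¹ • x) - ψ x₀))) atTop :=
          lintegral_mono fun x => hpt x
      _ ≤ liminf (fun k : ℕ => ∫⁻ x in Metric.ball a r,
            hl (((k:ℝ) + 1) • (ψ (x₀ + ((k:ℝ) + 1)⁻¹ • x) - ψ x₀))) atTop :=
          lintegral_liminf_le hmeas_u
      _ ≤ V * (ENNReal.ofReal (φ r) * (ENNReal.ofReal (Cs * (Cs * (K * C4))) * NN q φ hl)) ^ q := by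
          refine le_trans (Filter.liminf_le_liminf (Filter.Eventually.of_forall hIb)) ?_
          simp [Filter.liminf_const]
  exact invert_bound' hq0 hc0 hct hV0 hVt hfatou



lemma err_real {n : ℕ} {p q c0 ωR kR η : ℝ}
    (hq : 1 ≤ q) (hqp : q ≤ p) (hc0 : 0 < c0) (hω : 0 < ωR) (hkR : 1 ≤ kR) (hη : 0 < η) :
    ∃ e : ℝ, 0 < e ∧
      (∀ s : ℝ, 0 < s → s ^ (n : ℝ) ≤ e / (ωR * kR) →
        c0 * s ^ ((n : ℝ) / p) * kR ^ (1 / q) ≤ η) ∧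
      (∀ s : ℝ, 0 < s → e / (ωR * kR) ≤ s ^ (n : ℝ) →
        c0 * s ^ ((n : ℝ) / p) * (e / (ωR * s ^ (n : ℝ))) ^ (1 / q) ≤ η) := by
  have hq0 : (0:ℝ) < q := lt_of_lt_of_le one_pos hq
  have hp0 : (0:ℝ) < p := lt_of_lt_of_le hq0 hqp
  have hkR0 : (0:ℝ) < kR := lt_of_lt_of_le one_pos hkR
  have hkq : (0:ℝ) < kR ^ (1 / q) := Real.rpow_pos_of_pos hkR0 _
  set B : ℝ := η / (c0 * kR ^ (1 / q)) with hB
  have hBpos : 0 < B := div_pos hη (by positivity)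
  set X : ℝ := B ^ p with hX
  have hXpos : 0 < X := Real.rpow_pos_of_pos hBpos p
  have hXB : X ^ (1 / p) = B := by
    rw [hX, ← Real.rpow_mul hBpos.le, mul_one_div, div_self hp0.ne', Real.rpow_one]
  have hfinal : c0 * B * kR ^ (1 / q) = η := by
    rw [hB]; field_simp
  have hquot : ωR * kR * X / (ωR * kR) = X := by field_simp
  refine ⟨ωR * kR * X, by positivity, ?_, ?_⟩
  · intro s hs hsX
    rw [hquot] at hsX
    have h1 : s ^ ((n : ℝ) / p) ≤ B := by
      have h2 : s ^ ((n : ℝ) / p) = (s ^ (n : ℝ)) ^ (1 / p) := by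
        rw [← Real.rpow_mul hs.le, mul_one_div]
      rw [h2, ← hXB]
      exact Real.rpow_le_rpow (Real.rpow_nonneg hs.le _) hsX (by positivity)
    calc c0 * s ^ ((n : ℝ) / p) * kR ^ (1 / q)
        ≤ c0 * B * kR ^ (1 / q) := by
          exact mul_le_mul_of_nonneg_right (mul_le_mul_of_nonneg_left h1 hc0.le) hkq.le
      _ = η := hfinal
  · intro s hs hXs
    rw [hquot] at hXs
    set Y := s ^ (n : ℝ) with hY
    have hYpos : 0 < Y := Real.rpow_pos_of_pos hs _
    have he : ωR * kR * X / (ωR * Y) = kR * X / Y := by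
      rw [div_eq_div_iff (by positivity) hYpos.ne']; ring
    rw [he]
    have hs_np : s ^ ((n : ℝ) / p) = Y ^ (1 / p) := by
      rw [hY, ← Real.rpow_mul hs.le, mul_one_div]
    rw [hs_np]
    have hexp : (kR * X / Y) ^ (1 / q) = kR ^ (1 / q) * X ^ (1 / q) * Y ^ (-(1 / q)) := by
      rw [Real.div_rpow (by positivity) hYpos.le, Real.mul_rpow hkR0.le hXpos.le,
        Real.rpow_neg hYpos.le, div_eq_mul_inv]
    rw [hexp]
    have hcomb : c0 * Y ^ (1 / p) * (kR ^ (1 / q) * X ^ (1 / q) * Y ^ (-(1 / q)))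
        = c0 * kR ^ (1 / q) * X ^ (1 / q) * (Y ^ (1 / p) * Y ^ (-(1 / q))) := by ring
    rw [hcomb, ← Real.rpow_add hYpos]
    have hYX : Y ^ (1 / p + -(1 / q)) ≤ X ^ (1 / p + -(1 / q)) := by
      apply Real.rpow_le_rpow_of_nonpos hXpos hXs
      have : 1 / p ≤ 1 / q := one_div_le_one_div_of_le hq0 hqp
      linarith
    calc c0 * kR ^ (1 / q) * X ^ (1 / q) * Y ^ (1 / p + -(1 / q))
        ≤ c0 * kR ^ (1 / q) * X ^ (1 / q) * X ^ (1 / p + -(1 / q)) := by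
          exact mul_le_mul_of_nonneg_left hYX (by positivity)
      _ = c0 * kR ^ (1 / q) * X ^ (1 / p) := by
          rw [mul_assoc, ← Real.rpow_add hXpos]
          congr 2
          ring
      _ = η := by rw [hXB]; linarith [hfinal]

end ST10
end AuxST10

open ST10 Metric in
/-- Let `φ ∈ G₂^dec`, `1 ≤ q ≤ p < ∞` with `r^(−n/p) ≲ φ(r)`.
If a diffeomorphism `ψ` induces a bounded `C_ψ` on the generalized Morrey space
`M_q^φ(ℝⁿ)`, then there is `C > 0` independent of `x₀` and `f` with
`‖f(Dψ(x₀)·)‖_{M_q^φ} ≤ C ‖f‖_{M_q^φ}`. -/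
theorem statement10 {n : ℕ} (φ : ℝ → ℝ) (hφ : G2dec φ)
    (q p : ℝ) (hq : 1 ≤ q) (hqp : q ≤ p)
    (hφp : ∃ c > 0, ∀ r : ℝ, 0 < r → r ^ (-(n : ℝ) / p) ≤ c * φ r)
    (ψ ψinv : EuclideanSpace ℝ (Fin n) → EuclideanSpace ℝ (Fin n))
    (hinv₁ : Function.LeftInverse ψinv ψ) (hinv₂ : Function.RightInverse ψinv ψ)
    (hdiff : Differentiable ℝ ψ) (hdiff' : Differentiable ℝ ψinv)
    (hbdd : ∃ K > 0, ∀ f : EuclideanSpace ℝ (Fin n) → ℝ,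
      gMorreyNorm q φ (f ∘ ψ) ≤ ENNReal.ofReal K * gMorreyNorm q φ f) :
    ∃ C > 0, ∀ x₀ : EuclideanSpace ℝ (Fin n), ∀ f : EuclideanSpace ℝ (Fin n) → ℝ,
      gMorreyNorm q φ (fun x => f (fderiv ℝ ψ x₀ x)) ≤
        ENNReal.ofReal C * gMorreyNorm q φ f := by
  classical
  obtain ⟨⟨hpos, -, ⟨Cs, hCs, hsub⟩⟩, -, -, ⟨C4, hC4, h4⟩⟩ := hφ
  obtain ⟨c0, hc0R, hlow⟩ := hφp
  obtain ⟨K, hK, hb⟩ := hbdd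
  have hq0 : (0:ℝ) < q := lt_of_lt_of_le one_pos hq
  refine ⟨Cs * (Cs * (K * C4)), by positivity, ?_⟩
  intro x₀ f
  -- the derivative and its inverse
  have hA : HasFDerivAt ψ (fderiv ℝ ψ x₀) x₀ := (hdiff x₀).hasFDerivAt
  have hB : HasFDerivAt ψinv (fderiv ℝ ψinv (ψ x₀)) (ψ x₀) := (hdiff' (ψ x₀)).hasFDerivAt
  have hBA : ∀ x, fderiv ℝ ψinv (ψ x₀) (fderiv ℝ ψ x₀ x) = x := by
    have hcomp : HasFDerivAt (ψinv ∘ ψ) ((fderiv ℝ ψinv (ψ x₀)).comp (fderiv ℝ ψ x₀)) x₀ :=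
      hB.comp x₀ hA
    have hid : ψinv ∘ ψ = id := funext hinv₁
    rw [hid] at hcomp
    have huniq := hcomp.unique (hasFDerivAt_id x₀)
    intro x
    calc fderiv ℝ ψinv (ψ x₀) (fderiv ℝ ψ x₀ x)
        = ((fderiv ℝ ψinv (ψ x₀)).comp (fderiv ℝ ψ x₀)) x := rfl
      _ = (ContinuousLinearMap.id ℝ _) x := by rw [huniq]
      _ = x := rfl
  have hAB : ∀ x, fderiv ℝ ψ x₀ (fderiv ℝ ψinv (ψ x₀) x) = x := by
    have hA' : HasFDerivAt ψ (fderiv ℝ ψ x₀) (ψinv (ψ x₀)) := by rw [hinv₁ x₀]; exact hA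
    have hcomp : HasFDerivAt (ψ ∘ ψinv) ((fderiv ℝ ψ x₀).comp (fderiv ℝ ψinv (ψ x₀))) (ψ x₀) :=
      hA'.comp (ψ x₀) hB
    have hid : ψ ∘ ψinv = id := funext hinv₂
    rw [hid] at hcomp
    have huniq := hcomp.unique (hasFDerivAt_id (ψ x₀))
    intro x
    calc fderiv ℝ ψ x₀ (fderiv ℝ ψinv (ψ x₀) x)
        = ((fderiv ℝ ψ x₀).comp (fderiv ℝ ψinv (ψ x₀))) x := rfl
      _ = (ContinuousLinearMap.id ℝ _) x := by rw [huniq]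
      _ = x := rfl
  set Aeq : EuclideanSpace ℝ (Fin n) ≃L[ℝ] EuclideanSpace ℝ (Fin n) :=
    ContinuousLinearEquiv.equivOfInverse (fderiv ℝ ψ x₀) (fderiv ℝ ψinv (ψ x₀)) hBA hAB with hAeq
  have hAemb : MeasurableEmbedding (fun x : EuclideanSpace ℝ (Fin n) => fderiv ℝ ψ x₀ x) := by
    have h0 := Aeq.toHomeomorph.measurableEmbedding
    exact h0
  rw [gMorrey_eq_NN q φ f]
  show NN q φ (fun x => ENNReal.ofReal (|f (fderiv ℝ ψ x₀ x)| ^ q))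
      ≤ ENNReal.ofReal (Cs * (Cs * (K * C4))) * NN q φ (fun x => ENNReal.ofReal (|f x| ^ q))
  set g : EuclideanSpace ℝ (Fin n) → ℝ≥0∞ := fun z => ENNReal.ofReal (|f z| ^ q) with hg
  refine iSup_le fun a => iSup_le fun r => iSup_le fun hr => ?_
  by_cases hNN : NN q φ g = ⊤
  · rw [hNN, ENNReal.mul_top (by exact (ENNReal.ofReal_pos.2 (by positivity)).ne')]
    exact le_top
  set V := volume (Metric.ball a r) with hV
  have hV0 : V ≠ 0 := (measure_ball_pos _ _ hr).ne'
  have hVt : V ≠ ⊤ := measure_ball_lt_top.ne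
  have hcr0 : (ENNReal.ofReal (φ r)) ≠ 0 := (ENNReal.ofReal_pos.2 (hpos r hr)).ne'
  have hcrt : (ENNReal.ofReal (φ r)) ≠ ⊤ := ENNReal.ofReal_ne_top
  -- a measurable minorant with the same integral on the relevant set
  set μ : Measure (EuclideanSpace ℝ (Fin n)) :=
    (volume.restrict (Metric.ball a r)).map (fun x => fderiv ℝ ψ x₀ x) with hμ
  haveI hμfin : IsFiniteMeasure μ := by
    constructor
    rw [hμ, Measure.map_apply hAemb.measurable MeasurableSet.univ, Set.preimage_univ,
      Measure.restrict_apply_univ]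
    exact measure_ball_lt_top
  obtain ⟨m, hm_meas, hm_le, hm_int⟩ := exists_measurable_le_lintegral_eq μ g
  have hm_fin : ∀ z, m z ≠ ⊤ := fun z =>
    (lt_of_le_of_lt (hm_le z) ENNReal.ofReal_lt_top).ne
  have hswap : ∫⁻ x in Metric.ball a r, g (fderiv ℝ ψ x₀ x)
      = ∫⁻ x in Metric.ball a r, m (fderiv ℝ ψ x₀ x) := by
    calc ∫⁻ x in Metric.ball a r, g (fderiv ℝ ψ x₀ x)
        = ∫⁻ y, g y ∂μ := (hAemb.lintegral_map g).symm
      _ = ∫⁻ y, m y ∂μ := hm_int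
      _ = ∫⁻ x in Metric.ball a r, m (fderiv ℝ ψ x₀ x) := hAemb.lintegral_map m
  suffices hsuff : ∫⁻ x in Metric.ball a r, m (fderiv ℝ ψ x₀ x)
      ≤ V * (ENNReal.ofReal (φ r) * (ENNReal.ofReal (Cs * (Cs * (K * C4))) * NN q φ g)) ^ q by
    exact invert_bound' hq0 hcr0 hcrt hV0 hVt (le_of_eq_of_le hswap hsuff)
  -- truncation
  have hmono : Monotone (fun k : ℕ => fun x : EuclideanSpace ℝ (Fin n) =>
      min (m (fderiv ℝ ψ x₀ x)) (ENNReal.ofReal ((k:ℝ) + 1))) := by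
    intro i j hij x
    refine min_le_min le_rfl (ENNReal.ofReal_le_ofReal ?_)
    have hcast : (i:ℝ) ≤ (j:ℝ) := Nat.cast_le.2 hij
    linarith
  have htrunc : ∫⁻ x in Metric.ball a r, m (fderiv ℝ ψ x₀ x)
      = ⨆ k : ℕ, ∫⁻ x in Metric.ball a r,
          min (m (fderiv ℝ ψ x₀ x)) (ENNReal.ofReal ((k:ℝ) + 1)) := by
    have hmeask : ∀ k : ℕ, Measurable fun x : EuclideanSpace ℝ (Fin n) =>
        min (m (fderiv ℝ ψ x₀ x)) (ENNReal.ofReal ((k:ℝ) + 1)) :=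
      fun k => (hm_meas.comp hAemb.measurable).min measurable_const
    rw [← lintegral_iSup hmeask hmono]
    refine lintegral_congr fun x => ?_
    refine le_antisymm ?_ (iSup_le fun k => min_le_left _ _)
    obtain ⟨j, hj⟩ := ENNReal.exists_nat_gt (hm_fin (fderiv ℝ ψ x₀ x))
    refine le_iSup_of_le j (le_min le_rfl ?_)
    calc m (fderiv ℝ ψ x₀ x) ≤ (j : ℝ≥0∞) := hj.le
      _ ≤ ENNReal.ofReal ((j:ℝ) + 1) := by
          rw [← ENNReal.ofReal_natCast j]
          exact ENNReal.ofReal_le_ofReal (by linarith)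
  rw [htrunc]
  refine iSup_le fun k => ?_
  set kR : ℝ := (k:ℝ) + 1 with hkR
  have hkR1 : (1:ℝ) ≤ kR := by
    rw [hkR]
    have hk0 : (0:ℝ) ≤ (k:ℝ) := Nat.cast_nonneg k
    linarith
  set kbig : ℝ≥0∞ := ENNReal.ofReal kR with hkbig
  -- bound with an extra η = 1/(j+1), for every j
  have hjb : ∀ j : ℕ, ∫⁻ x in Metric.ball a r, min (m (fderiv ℝ ψ x₀ x)) kbig
      ≤ V * (ENNReal.ofReal (φ r) * (ENNReal.ofReal (Cs * (Cs * (K * C4))) *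
          (NN q φ g + ENNReal.ofReal (1 / ((j:ℝ) + 1))))) ^ q := by
    intro j
    set η : ℝ := 1 / ((j:ℝ) + 1) with hη
    have hηpos : 0 < η := by rw [hη]; positivity
    set ωE := volume (Metric.ball (0 : EuclideanSpace ℝ (Fin n)) 1) with hωE
    have hω0 : ωE ≠ 0 := (measure_ball_pos _ _ one_pos).ne'
    have hωt : ωE ≠ ⊤ := measure_ball_lt_top.ne
    have hωRpos : 0 < ωE.toReal := ENNReal.toReal_pos hω0 hωt
    obtain ⟨e, hepos, hbr1, hbr2⟩ := err_real (n := n) (p := p) hq hqp hc0R hωRpos hkR1 hηpos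
    set Eim : Set (EuclideanSpace ℝ (Fin n)) :=
      (fun x : EuclideanSpace ℝ (Fin n) => fderiv ℝ ψ x₀ x) '' Metric.ball a r with hEim
    have hEopen : IsOpen Eim := by
      have h0 := Aeq.toHomeomorph.isOpenMap _ (isOpen_ball (x := a) (ε := r))
      exact h0
    have hEvol : volume Eim ≠ ⊤ := by
      have hbd : Bornology.IsBounded Eim := by
        have h0 := (fderiv ℝ ψ x₀).lipschitz.isBounded_image (Metric.isBounded_ball (x := a) (r := r))
        exact h0
      exact hbd.measure_lt_top.ne
    set mk1 : EuclideanSpace ℝ (Fin n) → ℝ≥0∞ := Eim.indicator (fun z => min (m z) kbig) with hmk1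
    have hmk1_meas : Measurable mk1 := (hm_meas.min measurable_const).indicator hEopen.measurableSet
    have hmk1_le_g : ∀ z, mk1 z ≤ g z := by
      intro z
      refine le_trans ?_ (hm_le z)
      rw [hmk1]
      exact le_trans (Set.indicator_le_self _ _ z) (min_le_left _ _)
    have hmk1_int : ∫⁻ z, mk1 z ≠ ⊤ := by
      rw [hmk1, lintegral_indicator hEopen.measurableSet]
      have h6 : ∫⁻ z in Eim, min (m z) kbig ≤ ∫⁻ _ in Eim, kbig :=
        lintegral_mono fun z => min_le_right _ _
      refine ne_of_lt (lt_of_le_of_lt h6 ?_)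
      rw [setLIntegral_const]
      exact ENNReal.mul_lt_top (by rw [hkbig]; exact ENNReal.ofReal_lt_top) hEvol.lt_top
    obtain ⟨G, hGge, hGlsc, hGint⟩ := exists_le_lowerSemicontinuous_lintegral_ge volume mk1
      hmk1_meas (by exact (ENNReal.ofReal_pos.2 hepos).ne' : ENNReal.ofReal e ≠ 0)
    set hlf : EuclideanSpace ℝ (Fin n) → ℝ≥0∞ := fun z => min (G z) kbig with hhlf
    have hlf_lsc : LowerSemicontinuous hlf := by
      intro z y hy
      have h7 := hGlsc z y (lt_of_lt_of_le hy (min_le_left _ _))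
      have h8 : y < kbig := lt_of_lt_of_le hy (min_le_right _ _)
      exact h7.mono fun w hw => lt_min hw h8
    have hlf_fin : ∀ z, hlf z ≠ ⊤ := fun z =>
      (lt_of_le_of_lt (min_le_right _ _) (by rw [hkbig]; exact ENNReal.ofReal_lt_top)).ne
    have hmk1_le_hlf : ∀ z, mk1 z ≤ hlf z := by
      intro z
      refine le_min (hGge z) ?_
      rw [hmk1, Set.indicator_apply]
      split_ifs
      · exact min_le_right _ _
      · exact zero_le
    have hball_err : ∀ (b : EuclideanSpace ℝ (Fin n)) (s : ℝ),
        ∫⁻ z in Metric.ball b s, hlf z ≤ (∫⁻ z in Metric.ball b s, mk1 z) + ENNReal.ofReal e := by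
      intro b s
      have hcfin : ∫⁻ z in (Metric.ball b s)ᶜ, mk1 z ≠ ⊤ :=
        ne_top_of_le_ne_top hmk1_int (setLIntegral_le_lintegral _ _)
      have hsplit : (∫⁻ z in Metric.ball b s, G z) + ∫⁻ z in (Metric.ball b s)ᶜ, mk1 z
          ≤ ((∫⁻ z in Metric.ball b s, mk1 z) + ENNReal.ofReal e)
            + ∫⁻ z in (Metric.ball b s)ᶜ, mk1 z := by
        calc (∫⁻ z in Metric.ball b s, G z) + ∫⁻ z in (Metric.ball b s)ᶜ, mk1 z
            ≤ (∫⁻ z in Metric.ball b s, G z) + ∫⁻ z in (Metric.ball b s)ᶜ, G z :=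
              add_le_add_right (lintegral_mono fun z => hGge z) _
          _ = ∫⁻ z, G z := lintegral_add_compl G measurableSet_ball
          _ ≤ (∫⁻ z, mk1 z) + ENNReal.ofReal e := hGint
          _ = ((∫⁻ z in Metric.ball b s, mk1 z) + ∫⁻ z in (Metric.ball b s)ᶜ, mk1 z)
              + ENNReal.ofReal e := by rw [lintegral_add_compl mk1 measurableSet_ball]
          _ = ((∫⁻ z in Metric.ball b s, mk1 z) + ENNReal.ofReal e)
              + ∫⁻ z in (Metric.ball b s)ᶜ, mk1 z := by ring
      have h9 := (ENNReal.add_le_add_iff_right hcfin).1 hsplit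
      exact le_trans (lintegral_mono fun z => min_le_left _ _) h9
    have hstar := star_lsc φ q hq hpos hCs hsub hC4 h4 hK hdiff hb x₀ hlf hlf_lsc hlf_fin a hr
    have hNNhlf : NN q φ hlf ≤ NN q φ g + ENNReal.ofReal η := by
      refine iSup_le fun b => iSup_le fun s => iSup_le fun hs => ?_
      have hVb0 : volume (Metric.ball b s) ≠ 0 := (measure_ball_pos _ _ hs).ne'
      have hVbt : volume (Metric.ball b s) ≠ ⊤ := measure_ball_lt_top.ne
      have hinvφ : (ENNReal.ofReal (φ s))⁻¹ ≤ ENNReal.ofReal (c0 * s ^ ((n:ℝ) / p)) := by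
        apply ofReal_inv_le_of_le_mul (hpos s hs)
        have h10 := hlow s hs
        have hs1 : s ^ (-(n:ℝ) / p) = (s ^ ((n:ℝ) / p))⁻¹ := by
          rw [neg_div, Real.rpow_neg hs.le]
        rw [hs1] at h10
        have hsp : 0 < s ^ ((n:ℝ) / p) := Real.rpow_pos_of_pos hs _
        calc (1:ℝ) = (s ^ ((n:ℝ) / p))⁻¹ * s ^ ((n:ℝ) / p) := by rw [inv_mul_cancel₀ hsp.ne']
          _ ≤ (c0 * φ s) * s ^ ((n:ℝ) / p) := mul_le_mul_of_nonneg_right h10 hsp.le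
          _ = c0 * s ^ ((n:ℝ) / p) * φ s := by ring
      have hsnp0 : (0:ℝ) ≤ c0 * s ^ ((n:ℝ) / p) :=
        mul_nonneg hc0R.le (Real.rpow_nonneg hs.le _)
      rcases le_or_gt (s ^ (n:ℝ)) (e / (ωE.toReal * kR)) with hcase | hcase
      · have hb1 : (∫⁻ z in Metric.ball b s, hlf z) / volume (Metric.ball b s) ≤ kbig := by
          rw [ENNReal.div_le_iff_le_mul (Or.inl hVb0) (Or.inl hVbt)]
          calc ∫⁻ z in Metric.ball b s, hlf z ≤ ∫⁻ _ in Metric.ball b s, kbig :=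
                lintegral_mono fun z => min_le_right _ _
            _ = kbig * volume (Metric.ball b s) := setLIntegral_const _ _
        calc (ENNReal.ofReal (φ s))⁻¹ *
              ((∫⁻ z in Metric.ball b s, hlf z) / volume (Metric.ball b s)) ^ (1 / q)
            ≤ ENNReal.ofReal (c0 * s ^ ((n:ℝ) / p)) * kbig ^ (1 / q) :=
              mul_le_mul' hinvφ (ENNReal.rpow_le_rpow hb1 (by positivity))
          _ = ENNReal.ofReal (c0 * s ^ ((n:ℝ) / p) * kR ^ (1 / q)) := by
              rw [hkbig, ENNReal.ofReal_rpow_of_nonneg (by linarith) (by positivity),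
                ← ENNReal.ofReal_mul hsnp0]
          _ ≤ ENNReal.ofReal η := ENNReal.ofReal_le_ofReal (hbr1 s hs hcase)
          _ ≤ NN q φ g + ENNReal.ofReal η := le_add_self
      · have herr2 : (ENNReal.ofReal (φ s))⁻¹ *
            ((ENNReal.ofReal e) / volume (Metric.ball b s)) ^ (1 / q) ≤ ENNReal.ofReal η := by
          have hvol2 : (ENNReal.ofReal e) / volume (Metric.ball b s)
              = ENNReal.ofReal (e / (ωE.toReal * s ^ (n:ℝ))) := by
            rw [vol_ball_eq b hs, ← hωE,
              ENNReal.ofReal_div_of_pos (mul_pos hωRpos (Real.rpow_pos_of_pos hs _)),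
              ENNReal.ofReal_mul hωRpos.le, ENNReal.ofReal_toReal hωt,
              ← Real.rpow_natCast s n, mul_comm (ENNReal.ofReal (s ^ (n:ℝ))) ωE]
          rw [hvol2]
          have hdivnn : (0:ℝ) ≤ e / (ωE.toReal * s ^ (n:ℝ)) :=
            div_nonneg hepos.le (mul_nonneg hωRpos.le (Real.rpow_nonneg hs.le _))
          calc (ENNReal.ofReal (φ s))⁻¹ * (ENNReal.ofReal (e / (ωE.toReal * s ^ (n:ℝ)))) ^ (1 / q)
              ≤ ENNReal.ofReal (c0 * s ^ ((n:ℝ) / p)) *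
                ENNReal.ofReal ((e / (ωE.toReal * s ^ (n:ℝ))) ^ (1 / q)) := by
                refine mul_le_mul' hinvφ ?_
                rw [ENNReal.ofReal_rpow_of_nonneg hdivnn (by positivity)]
            _ = ENNReal.ofReal (c0 * s ^ ((n:ℝ) / p) * (e / (ωE.toReal * s ^ (n:ℝ))) ^ (1 / q)) :=
                (ENNReal.ofReal_mul hsnp0).symm
            _ ≤ ENNReal.ofReal η := ENNReal.ofReal_le_ofReal (hbr2 s hs hcase.le)
        calc (ENNReal.ofReal (φ s))⁻¹ *
              ((∫⁻ z in Metric.ball b s, hlf z) / volume (Metric.ball b s)) ^ (1 / q)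
            ≤ (ENNReal.ofReal (φ s))⁻¹ *
              (((∫⁻ z in Metric.ball b s, mk1 z) + ENNReal.ofReal e)
                / volume (Metric.ball b s)) ^ (1 / q) := by
              gcongr
              exact hball_err b s
          _ ≤ (ENNReal.ofReal (φ s))⁻¹ *
              (((∫⁻ z in Metric.ball b s, mk1 z) / volume (Metric.ball b s)) ^ (1 / q)
                + ((ENNReal.ofReal e) / volume (Metric.ball b s)) ^ (1 / q)) := by
              refine mul_le_mul_right ?_ _
              rw [ENNReal.add_div]
              exact ENNReal.rpow_add_le_add_rpow _ _ (by positivity)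
                (by rw [div_le_one hq0]; exact hq)
          _ = (ENNReal.ofReal (φ s))⁻¹ *
                ((∫⁻ z in Metric.ball b s, mk1 z) / volume (Metric.ball b s)) ^ (1 / q)
              + (ENNReal.ofReal (φ s))⁻¹ *
                ((ENNReal.ofReal e) / volume (Metric.ball b s)) ^ (1 / q) := mul_add _ _ _
          _ ≤ NN q φ g + ENNReal.ofReal η := by
              refine add_le_add ?_ herr2
              refine le_trans ?_ (term_le_NN q φ g b hs)
              refine mul_le_mul_right ?_ _
              refine ENNReal.rpow_le_rpow ?_ (by positivity)
              refine ENNReal.div_le_div_right ?_ _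
              exact lintegral_mono fun z => hmk1_le_g z
    calc ∫⁻ x in Metric.ball a r, min (m (fderiv ℝ ψ x₀ x)) kbig
        = ∫⁻ x in Metric.ball a r, mk1 (fderiv ℝ ψ x₀ x) := by
          refine setLIntegral_congr_fun measurableSet_ball (fun x hx => ?_)
          rw [hmk1]
          exact (Set.indicator_of_mem (show fderiv ℝ ψ x₀ x ∈ Eim from ⟨x, hx, rfl⟩) (fun z => min (m z) kbig)).symm
      _ ≤ ∫⁻ x in Metric.ball a r, hlf (fderiv ℝ ψ x₀ x) :=
          lintegral_mono fun x => hmk1_le_hlf _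
      _ ≤ V * (ENNReal.ofReal (φ r) * (ENNReal.ofReal (Cs * (Cs * (K * C4))) * NN q φ hlf)) ^ q :=
          invert_bound hq0 hcr0 hcrt hV0 hVt hstar
      _ ≤ V * (ENNReal.ofReal (φ r) * (ENNReal.ofReal (Cs * (Cs * (K * C4))) *
            (NN q φ g + ENNReal.ofReal η))) ^ q := by
          gcongr
  -- pass to the limit j → ∞
  have hlimit : Tendsto (fun j : ℕ => V * (ENNReal.ofReal (φ r) *
      (ENNReal.ofReal (Cs * (Cs * (K * C4))) * (NN q φ g + ENNReal.ofReal (1 / ((j:ℝ) + 1))))) ^ q)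
      atTop (nhds (V * (ENNReal.ofReal (φ r) *
        (ENNReal.ofReal (Cs * (Cs * (K * C4))) * NN q φ g)) ^ q)) := by
    have t1 : Tendsto (fun j : ℕ => ENNReal.ofReal (1 / ((j:ℝ) + 1))) atTop (nhds 0) := by
      have h0 := ENNReal.tendsto_ofReal (tendsto_one_div_add_atTop_nhds_zero_nat)
      simpa using h0
    have t2 : Tendsto (fun j : ℕ => NN q φ g + ENNReal.ofReal (1 / ((j:ℝ) + 1)))
        atTop (nhds (NN q φ g)) := by
      have h0 := Filter.Tendsto.const_add (NN q φ g) t1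
      simpa using h0
    have t3 : Tendsto (fun j : ℕ => ENNReal.ofReal (Cs * (Cs * (K * C4))) *
        (NN q φ g + ENNReal.ofReal (1 / ((j:ℝ) + 1)))) atTop
        (nhds (ENNReal.ofReal (Cs * (Cs * (K * C4))) * NN q φ g)) :=
      ENNReal.Tendsto.const_mul t2 (Or.inr ENNReal.ofReal_ne_top)
    have t4 : Tendsto (fun j : ℕ => ENNReal.ofReal (φ r) * (ENNReal.ofReal (Cs * (Cs * (K * C4))) *
        (NN q φ g + ENNReal.ofReal (1 / ((j:ℝ) + 1))))) atTop
        (nhds (ENNReal.ofReal (φ r) * (ENNReal.ofReal (Cs * (Cs * (K * C4))) * NN q φ g))) :=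
      ENNReal.Tendsto.const_mul t3 (Or.inr ENNReal.ofReal_ne_top)
    have t5 : Continuous fun x : ℝ≥0∞ => x ^ q := by fun_prop
    exact ENNReal.Tendsto.const_mul ((t5.tendsto _).comp t4) (Or.inr hVt)
  exact ge_of_tendsto' hlimit hjb
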